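/- Let K ∈ ℕ₀ and let f : ℝ → ℝ be 2π-periodic and K-times continuously differentiable. Then there exists a constant C_K > 0, depending only on K, such that for every N ∈ ℕ with N ≥ 1 there exists a real trigonometric polynomial T of degree at most ⌈(K+3)/2⌉·⌊N/2⌋ satisfying sup_{x∈ℝ} |f(x) − T(x)| ≤ C_K · ω_{f^{(K)}}(1/N) / N^K, where ω_g(δ) := sup{|g(x+t) − g(x)| : x ∈ ℝ, |t| < δ} is the modulus of continuity. -/

import Mathlib

open Real

/-- Global modulus of continuity of `g : ℝ → ℝ`. -/
noncomputable def modulusOfContinuity (g : ℝ → ℝ) (δ : ℝ) : ℝ :=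
  sSup {y : ℝ | ∃ x t : ℝ, |t| < δ ∧ y = |g (x + t) - g x|}
open intervalIntegral Finset

noncomputable section
namespace JacksonAux

/-- Dirichlet-type partial geometric sum. -/
def Dk (n : ℕ) (t : ℝ) : ℂ := ∑ k ∈ Finset.range n, Complex.exp (↑t * Complex.I) ^ k

/-- Fejér-type kernel (unnormalized): `|Dk|²`. -/
def G (n : ℕ) (t : ℝ) : ℝ := Complex.normSq (Dk n t)

/-- Jackson-type kernel (unnormalized): `G²`. -/
def Gsq (n : ℕ) (t : ℝ) : ℝ := (G n t) ^ 2

lemma continuous_Dk (n : ℕ) : Continuous (Dk n) := by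
  unfold Dk
  exact continuous_finset_sum _ fun k _ =>
    ((Complex.continuous_exp.comp (by continuity)).pow k)

lemma continuous_G (n : ℕ) : Continuous (G n) :=
  Complex.continuous_normSq.comp (continuous_Dk n)

lemma continuous_Gsq (n : ℕ) : Continuous (Gsq n) := (continuous_G n).pow 2

lemma G_nonneg (n : ℕ) (t : ℝ) : 0 ≤ G n t := Complex.normSq_nonneg _

lemma Gsq_nonneg (n : ℕ) (t : ℝ) : 0 ≤ Gsq n t := sq_nonneg _

lemma exp_pow_eq (t : ℝ) (k : ℕ) :
    Complex.exp (↑t * Complex.I) ^ k = Complex.exp (↑(k * t : ℝ) * Complex.I) := by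
  rw [← Complex.exp_nat_mul]
  push_cast
  ring_nf

lemma re_Dk (n : ℕ) (t : ℝ) : (Dk n t).re = ∑ k ∈ Finset.range n, Real.cos (k * t) := by
  unfold Dk
  rw [Complex.re_sum]
  refine Finset.sum_congr rfl fun k _ => ?_
  rw [exp_pow_eq, Complex.exp_ofReal_mul_I_re]

/-- `G` is at most `n²`. -/
lemma G_le (n : ℕ) (t : ℝ) : G n t ≤ (n : ℝ) ^ 2 := by
  have h1 : ‖Dk n t‖ ≤ (n : ℝ) := by
    unfold Dk
    calc ‖∑ k ∈ Finset.range n, Complex.exp (↑t * Complex.I) ^ k‖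
        ≤ ∑ k ∈ Finset.range n, ‖Complex.exp (↑t * Complex.I) ^ k‖ :=
          norm_sum_le _ _
      _ ≤ ∑ k ∈ Finset.range n, 1 := by
          refine Finset.sum_le_sum fun k _ => ?_
          rw [exp_pow_eq, Complex.norm_exp_ofReal_mul_I]
      _ = n := by simp
  have := Complex.sq_norm (Dk n t)
  unfold G
  rw [← this]
  have h0 : (0:ℝ) ≤ ‖Dk n t‖ := norm_nonneg _
  nlinarith

/-- Lower bound on `G` for small `t`. -/
lemma G_ge (n : ℕ) (hn : 1 ≤ n) (t : ℝ) (ht : |t| ≤ 1 / n) : ((n : ℝ)^2) / 4 ≤ G n t := by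
  have hre : (n : ℝ) / 2 ≤ (Dk n t).re := by
    rw [re_Dk]
    have : ∀ k ∈ Finset.range n, (1:ℝ)/2 ≤ Real.cos (k * t) := by
      intro k hk
      have hk' : (k : ℝ) ≤ (n : ℝ) := by
        exact_mod_cast (Finset.mem_range.mp hk).le
      have hkt : |(k:ℝ) * t| ≤ 1 := by
        rw [abs_mul, abs_of_nonneg (by positivity : (0:ℝ) ≤ (k:ℝ))]
        have hn0 : (0:ℝ) < n := by exact_mod_cast hn
        calc (k:ℝ) * |t| ≤ (n:ℝ) * (1/n) := by
              apply mul_le_mul hk' ht (abs_nonneg t) (le_of_lt hn0)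
          _ = 1 := by field_simp
      have h2 : ((k:ℝ) * t) ^ 2 ≤ 1 := by
        nlinarith [sq_abs ((k:ℝ) * t), abs_nonneg ((k:ℝ) * t)]
      have := Real.one_sub_sq_div_two_le_cos (x := (k:ℝ) * t)
      linarith
    calc (n:ℝ)/2 = ∑ k ∈ Finset.range n, (1:ℝ)/2 := by
          simp [Finset.sum_const]; ring
      _ ≤ ∑ k ∈ Finset.range n, Real.cos (k * t) := Finset.sum_le_sum this
  have : (Dk n t).re ^ 2 ≤ G n t := by
    unfold G Complex.normSq
    simp only [MonoidWithZeroHom.coe_mk, ZeroHom.coe_mk]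
    nlinarith [sq_nonneg (Dk n t).im]
  have hn0 : (0:ℝ) < n := by exact_mod_cast hn
  nlinarith

lemma normSq_exp_mul_I_sub_one (θ : ℝ) :
    Complex.normSq (Complex.exp (↑θ * Complex.I) - 1) = 4 * Real.sin (θ/2) ^ 2 := by
  rw [Complex.exp_mul_I]
  have h1 : Real.cos (2 * (θ/2)) = Real.cos (θ/2) ^ 2 - Real.sin (θ/2) ^ 2 :=
    Real.cos_two_mul' _
  rw [show 2 * (θ/2) = θ by ring] at h1
  have h2 : Real.sin (θ/2) ^ 2 + Real.cos (θ/2) ^ 2 = 1 := Real.sin_sq_add_cos_sq _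
  simp only [Complex.normSq_apply, Complex.add_re, Complex.add_im, Complex.mul_re, Complex.mul_im,
    Complex.cos_ofReal_re, Complex.cos_ofReal_im, Complex.sin_ofReal_re, Complex.sin_ofReal_im,
    Complex.I_re, Complex.I_im, Complex.sub_re, Complex.sub_im, Complex.one_re, Complex.one_im]
  ring_nf
  ring_nf at h1 h2
  nlinarith [Real.sin_sq_add_cos_sq θ]


/-- Closed form for `G` away from singularities. -/
lemma G_closed (n : ℕ) (t : ℝ) (h : Real.sin (t/2) ≠ 0) :
    G n t = Real.sin (n * t / 2) ^ 2 / Real.sin (t / 2) ^ 2 := by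
  have hz : Complex.exp (↑t * Complex.I) ≠ 1 := by
    intro hc
    apply h
    have := normSq_exp_mul_I_sub_one t
    rw [hc, sub_self, Complex.normSq_zero] at this
    have := this.symm
    nlinarith [sq_nonneg (Real.sin (t/2)), sq_abs (Real.sin (t/2))]
  unfold G Dk
  rw [geom_sum_eq hz]
  rw [Complex.normSq_div]
  rw [exp_pow_eq]
  rw [normSq_exp_mul_I_sub_one, normSq_exp_mul_I_sub_one]
  rw [mul_comm (n:ℝ) t] at *
  have : (t * n) / 2 = n * t / 2 := by ring
  rw [this]
  ring_nf
/-- Pointwise upper bound `G t ≤ π²/t²` for `0 < t ≤ π`. -/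
lemma G_le_inv_sq (n : ℕ) (t : ℝ) (h0 : 0 < t) (hπ : t ≤ π) :
    G n t ≤ π ^ 2 / t ^ 2 := by
  have hs : Real.sin (t / 2) ≠ 0 := by
    have : 0 < Real.sin (t / 2) := Real.sin_pos_of_pos_of_lt_pi (by linarith)
      (by nlinarith [Real.pi_pos])
    linarith
  have hsin : t / π ≤ Real.sin (t / 2) := by
    have := Real.mul_le_sin (x := t / 2) (by linarith) (by linarith)
    calc t / π = 2 / π * (t / 2) := by field_simp
      _ ≤ Real.sin (t / 2) := this
  rw [G_closed n t hs]
  have hπ0 := Real.pi_pos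
  have h1 : Real.sin (n * t / 2) ^ 2 ≤ 1 := by
    nlinarith [Real.neg_one_le_sin (n * t / 2), Real.sin_le_one (n * t / 2)]
  have h2 : (t / π) ^ 2 ≤ Real.sin (t / 2) ^ 2 := by
    have ht : 0 ≤ t / π := by positivity
    nlinarith
  have h3 : 0 < (t / π) ^ 2 := by positivity
  have h4 : 0 < Real.sin (t/2) ^ 2 := by positivity
  calc Real.sin (n * t / 2) ^ 2 / Real.sin (t / 2) ^ 2
      ≤ 1 / (t / π) ^ 2 := div_le_div₀ zero_le_one h1 h3 h2
    _ = π ^ 2 / t ^ 2 := by field_simp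

def cI (n : ℕ) : ℝ := ∫ t in (-π)..π, Gsq n t

def mu (n : ℕ) : ℝ := ∫ t in (-π)..π, |t| * Gsq n t

lemma intable_Gsq (n : ℕ) (a b : ℝ) : IntervalIntegrable (Gsq n) MeasureTheory.volume a b :=
  (continuous_Gsq n).intervalIntegrable a b

lemma intable_absGsq (n : ℕ) (a b : ℝ) :
    IntervalIntegrable (fun t => |t| * Gsq n t) MeasureTheory.volume a b :=
  (continuous_abs.mul (continuous_Gsq n)).intervalIntegrable a b

lemma inv_le_pi (n : ℕ) (hn : 1 ≤ n) : 1 / (n : ℝ) ≤ π := by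
  have h1 : (1:ℝ) ≤ n := by exact_mod_cast hn
  have := Real.pi_gt_three
  calc 1 / (n:ℝ) ≤ 1 / 1 := by apply one_div_le_one_div_of_le <;> linarith
    _ ≤ π := by linarith

lemma cI_lower (n : ℕ) (hn : 1 ≤ n) : (n:ℝ)^3 / 8 ≤ cI n := by
  have hn0 : (0:ℝ) < n := by exact_mod_cast hn
  have h1n : (0:ℝ) < 1 / n := by positivity
  have hπ := inv_le_pi n hn
  have e1 : cI n = (∫ t in (-π)..(-(1/(n:ℝ))), Gsq n t) + (∫ t in (-(1/(n:ℝ)))..(1/(n:ℝ)), Gsq n t)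
      + (∫ t in (1/(n:ℝ))..π, Gsq n t) := by
    unfold cI
    rw [← intervalIntegral.integral_add_adjacent_intervals (intable_Gsq n _ _) (intable_Gsq n _ _),
      ← intervalIntegral.integral_add_adjacent_intervals (a := -π) (b := -(1/(n:ℝ))) (c := 1/(n:ℝ))
        (intable_Gsq n _ _) (intable_Gsq n _ _)]
  have h2 : (0:ℝ) ≤ ∫ t in (-π)..(-(1/(n:ℝ))), Gsq n t :=
    intervalIntegral.integral_nonneg (by linarith) (fun t _ => Gsq_nonneg n t)
  have h3 : (0:ℝ) ≤ ∫ t in (1/(n:ℝ))..π, Gsq n t :=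
    intervalIntegral.integral_nonneg (by linarith) (fun t _ => Gsq_nonneg n t)
  have h4 : (n:ℝ)^3/8 ≤ ∫ t in (-(1/(n:ℝ)))..(1/(n:ℝ)), Gsq n t := by
    have hmono : ∫ t in (-(1/(n:ℝ)))..(1/(n:ℝ)), ((n:ℝ)^4/16) ≤
        ∫ t in (-(1/(n:ℝ)))..(1/(n:ℝ)), Gsq n t := by
      apply intervalIntegral.integral_mono_on (by linarith)
        (intervalIntegrable_const) (intable_Gsq n _ _)
      intro t ht
      have habs : |t| ≤ 1 / n := abs_le.mpr ⟨ht.1, ht.2⟩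
      have hG := G_ge n hn t habs
      have : ((n:ℝ)^2/4)^2 ≤ (G n t)^2 := by
        apply pow_le_pow_left₀ (by positivity) hG
      unfold Gsq
      calc (n:ℝ)^4/16 = ((n:ℝ)^2/4)^2 := by ring
        _ ≤ (G n t)^2 := this
    rw [intervalIntegral.integral_const] at hmono
    have : (1/(n:ℝ) - -(1/(n:ℝ))) • ((n:ℝ)^4/16) = (n:ℝ)^3/8 := by
      rw [smul_eq_mul]; field_simp; ring
    linarith [hmono, this.symm.le, this.le]
  linarith [e1.le, e1.ge]

lemma G_even (n : ℕ) (t : ℝ) : G n (-t) = G n t := by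
  unfold G Dk
  have : ∑ k ∈ Finset.range n, Complex.exp (↑(-t) * Complex.I) ^ k
      = (starRingEnd ℂ) (∑ k ∈ Finset.range n, Complex.exp (↑t * Complex.I) ^ k) := by
    rw [map_sum]
    refine Finset.sum_congr rfl fun k _ => ?_
    rw [map_pow, ← Complex.exp_conj]
    congr 2
    simp [Complex.ext_iff]
  rw [this, Complex.normSq_conj]

lemma mu_le (n : ℕ) (hn : 1 ≤ n) : mu n ≤ (1 + π^4) * (n:ℝ)^2 := by
  have hn0 : (0:ℝ) < n := by exact_mod_cast hn
  have h1n : (0:ℝ) < 1 / n := by positivity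
  have hπ := inv_le_pi n hn
  have hπ0 := Real.pi_pos
  set h : ℝ → ℝ := fun t => |t| * Gsq n t with hh
  have heven : ∀ t, h (-t) = h t := by
    intro t; simp only [hh]
    rw [abs_neg]
    unfold Gsq
    rw [G_even]
  have e0 : (∫ t in (-π)..(0:ℝ), h t) = ∫ t in (0:ℝ)..π, h t := by
    have := intervalIntegral.integral_comp_neg (a := (0:ℝ)) (b := π) (fun t => h t)
    rw [neg_zero] at this
    rw [← this]
    apply intervalIntegral.integral_congr
    intro t _
    exact heven t
  have e1 : mu n = 2 * ∫ t in (0:ℝ)..π, h t := by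
    unfold mu
    rw [← intervalIntegral.integral_add_adjacent_intervals (a := -π) (b := (0:ℝ)) (c := π)
      (intable_absGsq n _ _) (intable_absGsq n _ _)]
    have : (∫ t in (-π)..(0:ℝ), |t| * Gsq n t) = ∫ t in (-π)..(0:ℝ), h t := rfl
    rw [this, e0]; ring
  have e2 : (∫ t in (0:ℝ)..π, h t) = (∫ t in (0:ℝ)..(1/(n:ℝ)), h t) + ∫ t in (1/(n:ℝ))..π, h t := by
    rw [intervalIntegral.integral_add_adjacent_intervals (intable_absGsq n _ _) (intable_absGsq n _ _)]
  have h5 : (∫ t in (0:ℝ)..(1/(n:ℝ)), h t) ≤ (n:ℝ)^2/2 := by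
    have hmono : (∫ t in (0:ℝ)..(1/(n:ℝ)), h t) ≤ ∫ t in (0:ℝ)..(1/(n:ℝ)), (n:ℝ)^4 * t := by
      apply intervalIntegral.integral_mono_on (by linarith) (intable_absGsq n _ _)
        ((continuous_const.mul continuous_id).intervalIntegrable _ _)
      intro t ht
      have ht0 : 0 ≤ t := ht.1
      have hGsq : Gsq n t ≤ (n:ℝ)^4 := by
        unfold Gsq
        calc (G n t)^2 ≤ ((n:ℝ)^2)^2 := pow_le_pow_left₀ (G_nonneg n t) (G_le n t) 2
          _ = (n:ℝ)^4 := by ring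
      show |t| * Gsq n t ≤ (n:ℝ)^4 * t
      rw [abs_of_nonneg ht0]
      calc t * Gsq n t ≤ t * (n:ℝ)^4 := by
            apply mul_le_mul_of_nonneg_left hGsq ht0
        _ = (n:ℝ)^4 * t := by ring
    have : (∫ t in (0:ℝ)..(1/(n:ℝ)), (n:ℝ)^4 * t) = (n:ℝ)^2/2 := by
      rw [intervalIntegral.integral_const_mul, integral_id]
      field_simp; ring
    linarith
  have h6 : (∫ t in (1/(n:ℝ))..π, h t) ≤ π^4 * (n:ℝ)^2/2 := by
    have hnotin : (0:ℝ) ∉ Set.uIcc (1/(n:ℝ)) π := by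
      rw [Set.uIcc_of_le (by linarith)]
      intro hc
      exact absurd hc.1 (by linarith)
    have hmono : (∫ t in (1/(n:ℝ))..π, h t) ≤ ∫ t in (1/(n:ℝ))..π, π^4 * t^(-3:ℤ) := by
      apply intervalIntegral.integral_mono_on (by linarith) (intable_absGsq n _ _)
      · apply IntervalIntegrable.const_mul
        exact intervalIntegrable_zpow (Or.inr hnotin)
      intro t ht
      have ht0 : 0 < t := lt_of_lt_of_le h1n ht.1
      have hG := G_le_inv_sq n t ht0 ht.2
      have hGsq : Gsq n t ≤ π^4 / t^4 := by
        unfold Gsq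
        calc (G n t)^2 ≤ (π^2/t^2)^2 := pow_le_pow_left₀ (G_nonneg n t) hG 2
          _ = π^4/t^4 := by ring
      show |t| * Gsq n t ≤ π^4 * t^(-3:ℤ)
      rw [abs_of_nonneg ht0.le]
      have : t * (π^4 / t^4) = π^4 * t^(-3:ℤ) := by
        have ht' : t ≠ 0 := ne_of_gt ht0
        rw [zpow_neg, show ((3:ℤ)) = ((3:ℕ):ℤ) by norm_num, zpow_natCast]
        field_simp
      calc t * Gsq n t ≤ t * (π^4/t^4) := mul_le_mul_of_nonneg_left hGsq ht0.le
        _ = π^4 * t^(-3:ℤ) := this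
    have hint : (∫ t in (1/(n:ℝ))..π, t^(-3:ℤ)) = ((n:ℝ)^2 - (π^2)⁻¹)/2 := by
      rw [integral_zpow (Or.inr ⟨by norm_num, hnotin⟩)]
      rw [show (-3 + 1 : ℤ) = -2 by norm_num]
      rw [show ((-3:ℤ):ℝ) + 1 = -2 by norm_num]
      rw [zpow_neg, zpow_neg, show ((2:ℤ)) = ((2:ℕ):ℤ) by norm_num, zpow_natCast, zpow_natCast]
      rw [one_div, inv_pow, inv_inv]
      ring
    have hπinv : (0:ℝ) ≤ (π^2)⁻¹ := by positivity
    have : (∫ t in (1/(n:ℝ))..π, π^4 * t^(-3:ℤ)) ≤ π^4 * (n:ℝ)^2/2 := by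
      rw [intervalIntegral.integral_const_mul, hint]
      have h4 : (0:ℝ) ≤ π^4 := by positivity
      nlinarith
    linarith
  have hfin : mu n ≤ 2 * ((n:ℝ)^2/2 + π^4*(n:ℝ)^2/2) := by
    rw [e1, e2]; linarith
  calc mu n ≤ 2 * ((n:ℝ)^2/2 + π^4*(n:ℝ)^2/2) := hfin
    _ = (1 + π^4) * (n:ℝ)^2 := by ring

lemma cI_pos (n : ℕ) (hn : 1 ≤ n) : 0 < cI n := by
  have := cI_lower n hn
  have hn0 : (0:ℝ) < n := by exact_mod_cast hn
  have := pow_pos hn0 3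
  linarith

/-! ### Modulus of continuity machinery -/

/-- The defining set of the modulus of continuity. -/
def MS (g : ℝ → ℝ) (δ : ℝ) : Set ℝ := {y : ℝ | ∃ x t : ℝ, |t| < δ ∧ y = |g (x + t) - g x|}

lemma moc_eq (g : ℝ → ℝ) (δ : ℝ) : modulusOfContinuity g δ = sSup (MS g δ) := rfl

lemma bounded_of_per_cont {g : ℝ → ℝ} (hper : Function.Periodic g (2*π))
    (hc : Continuous g) : ∃ B : ℝ, ∀ x, |g x| ≤ B := by
  obtain ⟨B, hB⟩ := (isCompact_Icc (a := (0:ℝ)) (b := 2*π)).exists_bound_of_continuousOn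
    hc.continuousOn
  refine ⟨B, fun x => ?_⟩
  obtain ⟨y, hy, hxy⟩ := hper.exists_mem_Ico₀ (by positivity) x
  rw [hxy]
  exact hB y ⟨hy.1, hy.2.le⟩

lemma MS_bddAbove {g : ℝ → ℝ} {B δ : ℝ} (hB : ∀ x, |g x| ≤ B) : BddAbove (MS g δ) := by
  refine ⟨2*B, fun y hy => ?_⟩
  obtain ⟨x, t, _, hy⟩ := hy
  rw [hy]
  calc |g (x+t) - g x| ≤ |g (x+t)| + |g x| := abs_sub _ _
    _ ≤ B + B := add_le_add (hB _) (hB _)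
    _ = 2*B := by ring

lemma MS_zero_mem {g : ℝ → ℝ} {δ : ℝ} (hδ : 0 < δ) : (0:ℝ) ∈ MS g δ := by
  refine ⟨0, 0, by simpa using hδ, ?_⟩
  simp

lemma moc_nonneg {g : ℝ → ℝ} {δ : ℝ} (hδ : 0 < δ) (hbdd : BddAbove (MS g δ)) :
    0 ≤ modulusOfContinuity g δ :=
  le_csSup hbdd (MS_zero_mem hδ)

lemma le_moc {g : ℝ → ℝ} {δ : ℝ} (hbdd : BddAbove (MS g δ)) (x t : ℝ) (ht : |t| < δ) :
    |g (x + t) - g x| ≤ modulusOfContinuity g δ :=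
  le_csSup hbdd ⟨x, t, ht, rfl⟩

lemma moc_le {g : ℝ → ℝ} {δ A : ℝ} (hA : 0 ≤ A)
    (h : ∀ x t : ℝ, |t| < δ → |g (x + t) - g x| ≤ A) : modulusOfContinuity g δ ≤ A := by
  apply Real.sSup_le _ hA
  rintro y ⟨x, t, ht, rfl⟩
  exact h x t ht

/-- Telescoping step bound: if `|t| < (k+1)δ` then `|g(x+t)-g(x)| ≤ (k+1)·ω(δ)`. -/
lemma steps_bound {g : ℝ → ℝ} {δ : ℝ} (hbdd : BddAbove (MS g δ)) (k : ℕ) (x t : ℝ)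
    (ht : |t| < (k+1 : ℝ) * δ) :
    |g (x + t) - g x| ≤ (k+1 : ℝ) * modulusOfContinuity g δ := by
  have hk1 : (0:ℝ) < (k+1 : ℝ) := by positivity
  set s : ℝ := t / (k+1) with hs
  have hsδ : |s| < δ := by
    rw [hs, abs_div, abs_of_pos hk1, div_lt_iff₀ hk1]
    linarith [ht]
  set F : ℕ → ℝ := fun i => g (x + i * s) with hF
  have key : g (x + t) - g x = ∑ i ∈ Finset.range (k+1), (F (i+1) - F i) := by
    rw [Finset.sum_range_sub]
    simp only [hF]
    congr 2
    · rw [hs]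
      push_cast
      field_simp
    · simp
  rw [key]
  calc |∑ i ∈ Finset.range (k+1), (F (i+1) - F i)|
      ≤ ∑ i ∈ Finset.range (k+1), |F (i+1) - F i| := Finset.abs_sum_le_sum_abs _ _
    _ ≤ ∑ _i ∈ Finset.range (k+1), modulusOfContinuity g δ := by
        refine Finset.sum_le_sum fun i _ => ?_
        have : F (i+1) - F i = g ((x + i*s) + s) - g (x + i*s) := by
          simp only [hF]
          congr 2
          push_cast
          ring
        rw [this]
        exact le_moc hbdd _ _ hsδ
    _ = (k+1 : ℝ) * modulusOfContinuity g δ := by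
        rw [Finset.sum_const, Finset.card_range, nsmul_eq_mul]
        push_cast
        ring

/-- `ω(δ) ≤ 2 ω(δ')` when `δ ≤ 2 δ'`. -/
lemma moc_le_two_moc {g : ℝ → ℝ} {δ δ' : ℝ} (hδ' : 0 < δ') (hδδ' : δ ≤ 2 * δ')
    (hbdd : BddAbove (MS g δ')) :
    modulusOfContinuity g δ ≤ 2 * modulusOfContinuity g δ' := by
  apply moc_le (by linarith [moc_nonneg hδ' hbdd])
  intro x t ht
  have := steps_bound hbdd 1 x t (by push_cast; linarith)
  push_cast at this
  linarith

/-- Lipschitz-type bound on the modulus via a derivative bound. -/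
lemma moc_le_of_deriv {h : ℝ → ℝ} {B δ : ℝ} (hB : 0 ≤ B) (hδ : 0 < δ)
    (hdiff : Differentiable ℝ h) (hbound : ∀ y, |deriv h y| ≤ B) :
    modulusOfContinuity h δ ≤ δ * B := by
  apply moc_le (by positivity)
  intro x t ht
  have := convex_univ.norm_image_sub_le_of_norm_hasDerivWithin_le (f := h) (f' := deriv h)
    (s := Set.univ) (fun y _ => (hdiff y).hasDerivAt.hasDerivWithinAt)
    (fun y _ => by simpa using hbound y) (Set.mem_univ x) (Set.mem_univ (x+t))
  simp only [Real.norm_eq_abs] at this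
  calc |h (x+t) - h x| ≤ B * |x + t - x| := this
    _ = B * |t| := by congr 1; ring_nf
    _ ≤ B * δ := by apply mul_le_mul_of_nonneg_left (le_of_lt ht) hB
    _ = δ * B := by ring

/-! ### The Jackson operator -/

/-- Jackson approximation operator: normalized convolution with the kernel `Gsq`. -/
def Lop (n : ℕ) (g : ℝ → ℝ) (x : ℝ) : ℝ := (cI n)⁻¹ * ∫ t in (-π)..π, g (x + t) * Gsq n t

/-- The universal constant in the one-step Jackson estimate. -/
def c1 : ℝ := 1 + 8 * (1 + π^4)

lemma one_le_c1 : 1 ≤ c1 := by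
  unfold c1
  nlinarith [pow_pos Real.pi_pos 4]

lemma c1_pos : 0 < c1 := lt_of_lt_of_le one_pos one_le_c1

lemma mu_nonneg (n : ℕ) : 0 ≤ mu n := by
  unfold mu
  apply intervalIntegral.integral_nonneg (by linarith [Real.pi_pos])
  intro t _
  exact mul_nonneg (abs_nonneg t) (Gsq_nonneg n t)

/-- One-step Jackson estimate. -/
lemma Lop_approx (n : ℕ) (hn : 1 ≤ n) {g : ℝ → ℝ} (hper : Function.Periodic g (2*π))
    (hc : Continuous g) (x : ℝ) :
    |g x - Lop n g x| ≤ c1 * modulusOfContinuity g (1/(n:ℝ)) := by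
  have hπ0 := Real.pi_pos
  have hn0 : (0:ℝ) < n := by exact_mod_cast hn
  have hδ : (0:ℝ) < 1/(n:ℝ) := by positivity
  obtain ⟨B, hB⟩ := bounded_of_per_cont hper hc
  have hbdd : BddAbove (MS g (1/(n:ℝ))) := MS_bddAbove hB
  set w := modulusOfContinuity g (1/(n:ℝ)) with hw
  have hw0 : 0 ≤ w := moc_nonneg hδ hbdd
  have hstep : ∀ t : ℝ, |g (x + t) - g x| ≤ (1 + n * |t|) * w := by
    intro t
    set k : ℕ := ⌊|t| * n⌋₊ with hk
    have h0 : |t| * n < (k:ℝ) + 1 := by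
      exact_mod_cast Nat.lt_floor_add_one (|t| * n)
    have h1 : |t| < ((k:ℝ)+1) * (1/(n:ℝ)) := by
      rw [mul_one_div, lt_div_iff₀ hn0]
      exact h0
    have h2 := steps_bound hbdd k x t (by push_cast; push_cast at h1; linarith)
    have h3 : (k:ℝ) ≤ |t| * n := Nat.floor_le (by positivity)
    push_cast at h2
    calc |g (x+t) - g x| ≤ ((k:ℝ)+1) * w := h2
      _ ≤ (1 + n * |t|) * w := by
          apply mul_le_mul_of_nonneg_right _ hw0
          linarith [h3, mul_comm |t| (n:ℝ)]
  have hcI : 0 < cI n := cI_pos n hn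
  have hint1 : IntervalIntegrable (fun t => g (x+t) * Gsq n t) MeasureTheory.volume (-π) π :=
    ((hc.comp (continuous_const.add continuous_id)).mul (continuous_Gsq n)).intervalIntegrable _ _
  have heq : g x - Lop n g x = (cI n)⁻¹ * ∫ t in (-π)..π, (g x - g (x+t)) * Gsq n t := by
    unfold Lop
    have e : (fun t => (g x - g (x+t)) * Gsq n t)
        = fun t => g x * Gsq n t - g (x+t) * Gsq n t := by
      funext t; ring
    rw [e, intervalIntegral.integral_sub (f := fun t => g x * Gsq n t)
      ((continuous_const.mul (continuous_Gsq n)).intervalIntegrable _ _) hint1,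
      intervalIntegral.integral_const_mul]
    have : (∫ t in (-π)..π, Gsq n t) = cI n := rfl
    rw [this]
    field_simp
  have habs : |∫ t in (-π)..π, (g x - g (x+t)) * Gsq n t|
      ≤ ∫ t in (-π)..π, (1 + n*|t|) * w * Gsq n t := by
    have hc2 : Continuous fun t : ℝ => (g x - g (x+t)) * Gsq n t :=
      ((continuous_const.sub (hc.comp (continuous_const.add continuous_id))).mul
        (continuous_Gsq n))
    calc |∫ t in (-π)..π, (g x - g (x+t)) * Gsq n t|
        ≤ ∫ t in (-π)..π, |(g x - g (x+t)) * Gsq n t| :=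
          intervalIntegral.abs_integral_le_integral_abs (by linarith)
      _ ≤ ∫ t in (-π)..π, (1 + n*|t|) * w * Gsq n t := by
          apply intervalIntegral.integral_mono_on (by linarith)
            (hc2.abs.intervalIntegrable _ _)
            ((((continuous_const.add (continuous_const.mul continuous_abs)).mul
              continuous_const).mul (continuous_Gsq n)).intervalIntegrable _ _)
          intro t _
          rw [abs_mul, abs_of_nonneg (Gsq_nonneg n t), abs_sub_comm]
          apply mul_le_mul_of_nonneg_right (hstep t) (Gsq_nonneg n t)
  have hrhs : (∫ t in (-π)..π, (1 + n*|t|) * w * Gsq n t) = w * cI n + n * w * mu n := by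
    have e : (fun t : ℝ => (1 + n*|t|) * w * Gsq n t)
        = fun t => w * Gsq n t + (n*w) * (|t| * Gsq n t) := by
      funext t; ring
    rw [e, intervalIntegral.integral_add (f := fun t => w * Gsq n t)
      (g := fun t : ℝ => ((n:ℝ)*w) * (|t| * Gsq n t))
      ((continuous_const.mul (continuous_Gsq n)).intervalIntegrable _ _)
      ((continuous_const.mul (continuous_abs.mul (continuous_Gsq n))).intervalIntegrable _ _),
      intervalIntegral.integral_const_mul, intervalIntegral.integral_const_mul]
    unfold cI mu
    ring
  have h8 : (cI n)⁻¹ ≤ 8/(n:ℝ)^3 := by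
    rw [show (8:ℝ)/(n:ℝ)^3 = ((n:ℝ)^3/8)⁻¹ by field_simp]
    exact inv_anti₀ (by positivity) (cI_lower n hn)
  have hmu := mu_le n hn
  have hfin : |g x - Lop n g x| ≤ (cI n)⁻¹ * (w * cI n + n * w * mu n) := by
    rw [heq, abs_mul, abs_of_pos (inv_pos.mpr hcI)]
    apply mul_le_mul_of_nonneg_left _ (inv_pos.mpr hcI).le
    rw [← hrhs]
    exact habs
  have hsplit : (cI n)⁻¹ * (w * cI n + n * w * mu n) = w + (cI n)⁻¹ * (n * w * mu n) := by
    field_simp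
  have hlast : (cI n)⁻¹ * (n * w * mu n) ≤ 8*(1+π^4)*w := by
    calc (cI n)⁻¹ * (n * w * mu n)
        ≤ (8/(n:ℝ)^3) * ((n:ℝ) * w * ((1+π^4)*(n:ℝ)^2)) := by
          apply mul_le_mul h8 _ _ (by positivity)
          · exact mul_le_mul_of_nonneg_left hmu (by positivity)
          · exact mul_nonneg (mul_nonneg hn0.le hw0) (mu_nonneg n)
      _ = 8*(1+π^4)*w := by field_simp
  rw [hw] at *
  calc |g x - Lop n g x| ≤ w + (cI n)⁻¹ * (n * w * mu n) := by rw [← hsplit]; exact hfin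
    _ ≤ w + 8*(1+π^4)*w := by linarith
    _ = c1 * w := by unfold c1; ring

/-! ### Trigonometric polynomial representation of `Lop` -/

/-- Fourier-type cosine coefficient. -/
def Cg (g : ℝ → ℝ) (j : ℕ) : ℝ := ∫ u in (-π)..π, g u * Real.cos (j * u)

/-- Fourier-type sine coefficient. -/
def Sg (g : ℝ → ℝ) (j : ℕ) : ℝ := ∫ u in (-π)..π, g u * Real.sin (j * u)

/-- Index set for the expansion of `Gsq`. -/
def Q (n : ℕ) : Finset ((ℕ × ℕ) × (ℕ × ℕ)) :=
  (Finset.range n ×ˢ Finset.range n) ×ˢ (Finset.range n ×ˢ Finset.range n)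

/-- Signed frequency of an index. -/
def mz (q : (ℕ × ℕ) × (ℕ × ℕ)) : ℤ := (q.1.1 + q.1.2 : ℤ) - (q.2.1 + q.2.2 : ℤ)

/-- Absolute frequency. -/
def φf (q : (ℕ × ℕ) × (ℕ × ℕ)) : ℕ := (mz q).natAbs

def cnt (n j : ℕ) : ℕ := ((Q n).filter (fun q => φf q = j)).card

def coA (n : ℕ) (g : ℝ → ℝ) (j : ℕ) : ℝ := (cI n)⁻¹ * cnt n j * Cg g j

def coB (n : ℕ) (g : ℝ → ℝ) (j : ℕ) : ℝ := (cI n)⁻¹ * cnt n j * Sg g j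

lemma cont_cosmul (c : ℝ) : Continuous fun u : ℝ => Real.cos (c * u) :=
  Real.continuous_cos.comp (continuous_const.mul continuous_id)

lemma cont_sinmul (c : ℝ) : Continuous fun u : ℝ => Real.sin (c * u) :=
  Real.continuous_sin.comp (continuous_const.mul continuous_id)

lemma conj_exp_pow (s : ℝ) (b : ℕ) :
    (starRingEnd ℂ) (Complex.exp (↑s * Complex.I) ^ b) = Complex.exp (↑(-(b:ℝ) * s) * Complex.I) := by
  rw [map_pow, ← Complex.exp_conj]
  have : (starRingEnd ℂ) (↑s * Complex.I) = -(↑s * Complex.I) := by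
    simp [Complex.ext_iff]
  rw [this, ← Complex.exp_nat_mul]
  congr 1
  push_cast
  ring

lemma exp_mul_exp (a b s : ℝ) :
    Complex.exp (↑(a * s) * Complex.I) * Complex.exp (↑(b * s) * Complex.I)
      = Complex.exp (↑((a + b) * s) * Complex.I) := by
  rw [← Complex.exp_add]
  congr 1
  push_cast
  ring

/-- Expansion of the Jackson kernel into cosines. -/
lemma Gsq_expand (n : ℕ) (s : ℝ) :
    Gsq n s = ∑ q ∈ Q n, Real.cos (((mz q : ℤ) : ℝ) * s) := by
  set z : ℂ := Complex.exp (↑s * Complex.I) with hz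
  have h1 : Gsq n s = Complex.normSq ((Dk n s) ^ 2) := by
    unfold Gsq G
    rw [map_pow]
  have h2 : (Dk n s) ^ 2 = ∑ p ∈ Finset.range n ×ˢ Finset.range n, z ^ (p.1 + p.2) := by
    rw [sq]
    unfold Dk
    rw [Finset.sum_mul_sum, Finset.sum_product]
    exact Finset.sum_congr rfl fun i _ => Finset.sum_congr rfl fun j _ => (pow_add z i j).symm
  have h3 : Complex.normSq ((Dk n s)^2)
      = (((Dk n s)^2) * (starRingEnd ℂ) ((Dk n s)^2)).re := by
    rw [Complex.mul_conj, Complex.ofReal_re]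
  have h4 : ((Dk n s)^2) * (starRingEnd ℂ) ((Dk n s)^2)
      = ∑ q ∈ Q n, Complex.exp (↑(((mz q : ℤ) : ℝ)) * ↑s * Complex.I) := by
    rw [h2, map_sum, Finset.sum_mul_sum]
    unfold Q
    simp only [Finset.sum_product]
    refine Finset.sum_congr rfl fun k1 _ => Finset.sum_congr rfl fun k2 _ =>
      Finset.sum_congr rfl fun k3 _ => Finset.sum_congr rfl fun k4 _ => ?_
    have e1 : z ^ ((k1, k2).1 + (k1, k2).2)
        = Complex.exp (↑((((k1, k2).1 + (k1, k2).2 : ℕ) : ℝ) * s) * Complex.I) := by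
      rw [hz, exp_pow_eq]
    rw [e1, conj_exp_pow, exp_mul_exp]
    unfold mz
    congr 2
    push_cast
    ring
  rw [h1, h3, h4, Complex.re_sum]
  apply Finset.sum_congr rfl
  intro q _
  have : (↑(((mz q : ℤ) : ℝ)) * ↑s : ℂ) = ((((mz q : ℤ) : ℝ) * s : ℝ) : ℂ) := by push_cast; ring
  rw [this, Complex.exp_ofReal_mul_I_re]

lemma cos_freq_split (m : ℝ) (j : ℕ) (hm : m = (j:ℝ) ∨ m = -(j:ℝ)) (u x : ℝ) :
    Real.cos (m * (u - x))
      = Real.cos ((j:ℝ) * u) * Real.cos ((j:ℝ) * x) + Real.sin ((j:ℝ) * u) * Real.sin ((j:ℝ) * x) := by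
  rcases hm with h | h <;> subst h
  · rw [show (j:ℝ) * (u - x) = (j:ℝ)*u - (j:ℝ)*x by ring, Real.cos_sub]
  · rw [show (-(j:ℝ)) * (u - x) = -((j:ℝ)*u - (j:ℝ)*x) by ring, Real.cos_neg, Real.cos_sub]

lemma φf_freq (q : (ℕ × ℕ) × (ℕ × ℕ)) :
    ((mz q : ℤ) : ℝ) = ((φf q : ℕ) : ℝ) ∨ ((mz q : ℤ) : ℝ) = -((φf q : ℕ) : ℝ) := by
  rcases Int.natAbs_eq (mz q) with h | h
  · left; rw [h, Int.cast_natCast]; rfl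
  · right; rw [h, Int.cast_neg, Int.cast_natCast]; rfl

lemma φf_le (n : ℕ) (q : (ℕ × ℕ) × (ℕ × ℕ)) (hq : q ∈ Q n) : φf q ≤ 2*n - 2 := by
  unfold Q at hq
  simp only [Finset.mem_product, Finset.mem_range] at hq
  obtain ⟨⟨h1, h2⟩, h3, h4⟩ := hq
  unfold φf mz
  omega

lemma Gsq_periodic (n : ℕ) : Function.Periodic (Gsq n) (2*π) := by
  intro t
  unfold Gsq G Dk
  have h1 : Complex.exp (↑(t + 2*π) * Complex.I) = Complex.exp (↑t * Complex.I) := by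
    rw [Complex.ofReal_add, add_mul, Complex.exp_add]
    have h2 : ((2*π : ℝ) : ℂ) * Complex.I = 2 * ↑π * Complex.I := by push_cast; ring
    rw [h2, Complex.exp_two_pi_mul_I, mul_one]
  rw [h1]

/-- Representation of `Lop` as a trigonometric polynomial. -/
lemma Lop_eq (n : ℕ) (hn : 1 ≤ n) {g : ℝ → ℝ} (hper : Function.Periodic g (2*π))
    (hc : Continuous g) (M : ℕ) (hM : 2*n ≤ M + 2) (x : ℝ) :
    Lop n g x = coA n g 0 + ∑ j ∈ Finset.Icc 1 M,
      (coA n g j * Real.cos (j * x) + coB n g j * Real.sin (j * x)) := by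
  have hπ0 := Real.pi_pos
  set H : ℕ → ℝ := fun j => Real.cos (j * x) * Cg g j + Real.sin (j * x) * Sg g j with hH
  have step1 : (∫ t in (-π)..π, g (x + t) * Gsq n t)
      = ∫ u in (-π)..π, g u * Gsq n (u - x) := by
    have e1 : (∫ t in (-π)..π, g (x + t) * Gsq n t)
        = ∫ u in (x + -π)..(x + π), g u * Gsq n (u - x) := by
      rw [← intervalIntegral.integral_comp_add_left (fun u => g u * Gsq n (u - x)) x]
      apply intervalIntegral.integral_congr
      intro t _
      simp only [add_sub_cancel_left]
    rw [e1]
    have hper2 : Function.Periodic (fun u => g u * Gsq n (u - x)) (2*π) := by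
      intro u
      simp only
      rw [hper u, show u + 2*π - x = (u - x) + 2*π by ring, Gsq_periodic n (u-x)]
    have h2 := hper2.intervalIntegral_add_eq (x + -π) (-π)
    rw [show x + -π + 2*π = x + π by ring, show -π + 2*π = π by ring] at h2
    exact h2
  have step2 : ∀ u : ℝ, g u * Gsq n (u - x)
      = ∑ q ∈ Q n, (Real.cos ((φf q : ℝ) * x) * (g u * Real.cos ((φf q : ℝ) * u))
          + Real.sin ((φf q : ℝ) * x) * (g u * Real.sin ((φf q : ℝ) * u))) := by
    intro u
    rw [Gsq_expand n (u - x), Finset.mul_sum]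
    apply Finset.sum_congr rfl
    intro q _
    rw [cos_freq_split _ (φf q) (φf_freq q) u x]
    ring
  have step3 : (∫ u in (-π)..π, g u * Gsq n (u - x)) = ∑ q ∈ Q n, H (φf q) := by
    rw [intervalIntegral.integral_congr (g := fun u => ∑ q ∈ Q n,
      (Real.cos ((φf q : ℝ) * x) * (g u * Real.cos ((φf q : ℝ) * u))
        + Real.sin ((φf q : ℝ) * x) * (g u * Real.sin ((φf q : ℝ) * u))))
      (fun u _ => step2 u)]
    rw [intervalIntegral.integral_finset_sum]
    · apply Finset.sum_congr rfl
      intro q _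
      rw [intervalIntegral.integral_add
          (f := fun u => Real.cos ((φf q : ℝ) * x) * (g u * Real.cos ((φf q : ℝ) * u)))
          (g := fun u => Real.sin ((φf q : ℝ) * x) * (g u * Real.sin ((φf q : ℝ) * u)))
        ((continuous_const.mul (hc.mul (cont_cosmul _))).intervalIntegrable _ _)
        ((continuous_const.mul (hc.mul (cont_sinmul _))).intervalIntegrable _ _),
        intervalIntegral.integral_const_mul, intervalIntegral.integral_const_mul]
      rfl
    · intro q _
      exact ((continuous_const.mul (hc.mul (cont_cosmul _))).add
        (continuous_const.mul (hc.mul (cont_sinmul _)))).intervalIntegrable _ _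
  have step4 : ∑ q ∈ Q n, H (φf q) = ∑ j ∈ Finset.range (M+1), (cnt n j) • H j := by
    rw [Finset.sum_comp]
    apply Finset.sum_subset
    · intro j hj
      obtain ⟨q, hq, rfl⟩ := Finset.mem_image.mp hj
      have := φf_le n q hq
      rw [Finset.mem_range]
      omega
    · intro j _ hj
      have he : (Q n).filter (fun a => φf a = j) = ∅ := by
        apply Finset.filter_eq_empty_iff.mpr
        intro q hq hqj
        exact hj (Finset.mem_image.mpr ⟨q, hq, hqj⟩)
      show ((Q n).filter (fun a => φf a = j)).card • H j = 0
      rw [he]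
      simp
  have hzero : (0:ℕ) ∉ Finset.Icc 1 M := by simp
  have hins : Finset.range (M+1) = insert 0 (Finset.Icc 1 M) := by
    ext j
    simp only [Finset.mem_range, Finset.mem_insert, Finset.mem_Icc]
    omega
  unfold Lop
  rw [step1, step3, step4, hins, Finset.sum_insert hzero, mul_add]
  have h0 : (cI n)⁻¹ * ((cnt n 0) • H 0) = coA n g 0 := by
    simp only [hH, nsmul_eq_mul]
    unfold coA
    norm_num
    ring
  rw [h0, Finset.mul_sum]
  congr 1
  apply Finset.sum_congr rfl
  intro j _
  simp only [hH, nsmul_eq_mul]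
  unfold coA coB
  ring

/-! ### Derivative and regularity properties of `Lop` -/

lemma periodic_deriv {g : ℝ → ℝ} (hper : Function.Periodic g (2*π)) :
    Function.Periodic (deriv g) (2*π) := by
  intro x
  have h1 : deriv (fun y => g (y + 2*π)) x = deriv g (x + 2*π) := deriv_comp_add_const g _ x
  rw [← h1]
  congr 1
  funext y
  exact hper y

lemma periodic_iteratedDeriv {g : ℝ → ℝ} (hper : Function.Periodic g (2*π)) (k : ℕ) :
    Function.Periodic (iteratedDeriv k g) (2*π) := by
  induction k with
  | zero => simpa using hper
  | succ k ih =>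
    rw [iteratedDeriv_succ]
    exact periodic_deriv ih

lemma hasDerivAt_cos_mul (j : ℕ) (x : ℝ) :
    HasDerivAt (fun y : ℝ => Real.cos ((j:ℝ) * y)) (-((j:ℝ) * Real.sin ((j:ℝ) * x))) x := by
  have h1 : HasDerivAt (fun y : ℝ => (j:ℝ) * y) ((j:ℝ)) x := by
    simpa using (hasDerivAt_id x).const_mul (j:ℝ)
  have := (Real.hasDerivAt_cos ((j:ℝ)*x)).comp x h1
  exact this.congr_deriv (by ring)

lemma hasDerivAt_sin_mul (j : ℕ) (x : ℝ) :
    HasDerivAt (fun y : ℝ => Real.sin ((j:ℝ) * y)) ((j:ℝ) * Real.cos ((j:ℝ) * x)) x := by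
  have h1 : HasDerivAt (fun y : ℝ => (j:ℝ) * y) ((j:ℝ)) x := by
    simpa using (hasDerivAt_id x).const_mul (j:ℝ)
  have := (Real.hasDerivAt_sin ((j:ℝ)*x)).comp x h1
  exact this.congr_deriv (by ring)

/-- The closed form of `Lop` gives smoothness. -/
lemma contDiff_Lop (n : ℕ) (hn : 1 ≤ n) {g : ℝ → ℝ} (hper : Function.Periodic g (2*π))
    (hc : Continuous g) (m : ℕ∞) : ContDiff ℝ m (Lop n g) := by
  have e : Lop n g = fun x => coA n g 0 + ∑ j ∈ Finset.Icc 1 (2*n),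
      (coA n g j * Real.cos (j * x) + coB n g j * Real.sin (j * x)) :=
    funext (Lop_eq n hn hper hc (2*n) (by omega))
  rw [e]
  apply ContDiff.add contDiff_const
  apply ContDiff.sum
  intro j _
  exact (contDiff_const.mul (Real.contDiff_cos.comp (contDiff_const.mul contDiff_id))).add
    (contDiff_const.mul (Real.contDiff_sin.comp (contDiff_const.mul contDiff_id)))

lemma continuous_Lop (n : ℕ) (hn : 1 ≤ n) {g : ℝ → ℝ} (hper : Function.Periodic g (2*π))
    (hc : Continuous g) : Continuous (Lop n g) :=
  (contDiff_Lop n hn hper hc 0).continuous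

lemma periodic_Lop (n : ℕ) (hn : 1 ≤ n) {g : ℝ → ℝ} (hper : Function.Periodic g (2*π))
    (hc : Continuous g) : Function.Periodic (Lop n g) (2*π) := by
  intro x
  rw [Lop_eq n hn hper hc (2*n) (by omega) (x + 2*π), Lop_eq n hn hper hc (2*n) (by omega) x]
  congr 1
  apply Finset.sum_congr rfl
  intro j _
  rw [mul_add, Real.cos_add_nat_mul_two_pi, Real.sin_add_nat_mul_two_pi]

/-- Integration by parts: cosine coefficient of the derivative. -/
lemma Cg_deriv {g : ℝ → ℝ} (hper : Function.Periodic g (2*π)) (hg : ContDiff ℝ 1 g) (j : ℕ) :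
    Cg (deriv g) j = (j:ℝ) * Sg g j := by
  have hπ0 := Real.pi_pos
  have hc' : Continuous (deriv g) := hg.continuous_deriv le_rfl
  have hdiff : Differentiable ℝ g := hg.differentiable one_ne_zero
  have hgg : g π = g (-π) := by
    have := hper (-π)
    rw [show -π + 2*π = π by ring] at this
    exact this
  have hparts := intervalIntegral.integral_mul_deriv_eq_deriv_mul
    (u := fun y => Real.cos ((j:ℝ) * y)) (u' := fun y => -((j:ℝ) * Real.sin ((j:ℝ) * y)))
    (v := g) (v' := deriv g) (a := -π) (b := π)
    (fun y _ => hasDerivAt_cos_mul j y)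
    (fun y _ => (hdiff y).hasDerivAt)
    (((continuous_const.mul (cont_sinmul _)).neg).intervalIntegrable _ _)
    (hc'.intervalIntegrable _ _)
  have e1 : Cg (deriv g) j = ∫ y in (-π)..π, Real.cos ((j:ℝ) * y) * deriv g y := by
    unfold Cg
    apply intervalIntegral.integral_congr
    intro y _
    ring
  rw [e1, hparts]
  have hbd : Real.cos ((j:ℝ) * π) * g π - Real.cos ((j:ℝ) * (-π)) * g (-π) = 0 := by
    rw [show (j:ℝ) * (-π) = -((j:ℝ)*π) by ring, Real.cos_neg, hgg]
    ring
  rw [hbd]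
  have e2 : (∫ y in (-π)..π, -((j:ℝ) * Real.sin ((j:ℝ) * y)) * g y)
      = -((j:ℝ) * Sg g j) := by
    have e3 : (fun y => -((j:ℝ) * Real.sin ((j:ℝ) * y)) * g y)
        = fun y => (-(j:ℝ)) * (g y * Real.sin ((j:ℝ) * y)) := by
      funext y; ring
    rw [e3, intervalIntegral.integral_const_mul]
    unfold Sg
    ring
  rw [e2]
  ring

/-- Integration by parts: sine coefficient of the derivative. -/
lemma Sg_deriv {g : ℝ → ℝ} (hper : Function.Periodic g (2*π)) (hg : ContDiff ℝ 1 g) (j : ℕ) :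
    Sg (deriv g) j = -((j:ℝ) * Cg g j) := by
  have hπ0 := Real.pi_pos
  have hc' : Continuous (deriv g) := hg.continuous_deriv le_rfl
  have hdiff : Differentiable ℝ g := hg.differentiable one_ne_zero
  have hparts := intervalIntegral.integral_mul_deriv_eq_deriv_mul
    (u := fun y => Real.sin ((j:ℝ) * y)) (u' := fun y => (j:ℝ) * Real.cos ((j:ℝ) * y))
    (v := g) (v' := deriv g) (a := -π) (b := π)
    (fun y _ => hasDerivAt_sin_mul j y)
    (fun y _ => (hdiff y).hasDerivAt)
    ((continuous_const.mul (cont_cosmul _)).intervalIntegrable _ _)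
    (hc'.intervalIntegrable _ _)
  have e1 : Sg (deriv g) j = ∫ y in (-π)..π, Real.sin ((j:ℝ) * y) * deriv g y := by
    unfold Sg
    apply intervalIntegral.integral_congr
    intro y _
    ring
  rw [e1, hparts]
  have hs0 : Real.sin ((j:ℝ) * π) = 0 := Real.sin_nat_mul_pi j
  have hbd : Real.sin ((j:ℝ) * π) * g π - Real.sin ((j:ℝ) * (-π)) * g (-π) = 0 := by
    rw [show (j:ℝ) * (-π) = -((j:ℝ)*π) by ring, Real.sin_neg, hs0]
    ring
  rw [hbd]
  have e2 : (∫ y in (-π)..π, ((j:ℝ) * Real.cos ((j:ℝ) * y)) * g y)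
      = (j:ℝ) * Cg g j := by
    have e3 : (fun y => ((j:ℝ) * Real.cos ((j:ℝ) * y)) * g y)
        = fun y => (j:ℝ) * (g y * Real.cos ((j:ℝ) * y)) := by
      funext y; ring
    rw [e3, intervalIntegral.integral_const_mul]
    unfold Cg
    rfl
  rw [e2]
  ring

/-- The Jackson operator commutes with differentiation. -/
lemma hasDerivAt_Lop (n : ℕ) (hn : 1 ≤ n) {g : ℝ → ℝ} (hper : Function.Periodic g (2*π))
    (hg : ContDiff ℝ 1 g) (x : ℝ) :
    HasDerivAt (Lop n g) (Lop n (deriv g) x) x := by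
  have hc := hg.continuous
  have hc' : Continuous (deriv g) := hg.continuous_deriv le_rfl
  have hper' : Function.Periodic (deriv g) (2*π) := periodic_deriv hper
  have e : Lop n g = fun y => coA n g 0 + ∑ j ∈ Finset.Icc 1 (2*n),
      (coA n g j * Real.cos (j * y) + coB n g j * Real.sin (j * y)) :=
    funext (Lop_eq n hn hper hc (2*n) (by omega))
  rw [e]
  have hd : HasDerivAt (fun y => coA n g 0 + ∑ j ∈ Finset.Icc 1 (2*n),
      (coA n g j * Real.cos (j * y) + coB n g j * Real.sin (j * y)))
      (∑ j ∈ Finset.Icc 1 (2*n),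
        (coA n g j * (-((j:ℝ) * Real.sin ((j:ℝ) * x))) + coB n g j * ((j:ℝ) * Real.cos ((j:ℝ) * x)))) x := by
    apply HasDerivAt.const_add
    apply HasDerivAt.fun_sum
    intro j _
    exact ((hasDerivAt_cos_mul j x).const_mul (coA n g j)).add
      ((hasDerivAt_sin_mul j x).const_mul (coB n g j))
  convert hd using 1
  rw [Lop_eq n hn hper' hc' (2*n) (by omega) x]
  have h0 : coA n (deriv g) 0 = 0 := by
    unfold coA
    rw [Cg_deriv hper hg 0]
    norm_num
  rw [h0, zero_add]
  apply Finset.sum_congr rfl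
  intro j _
  unfold coA coB
  rw [Cg_deriv hper hg j, Sg_deriv hper hg j]
  ring

/-! ### The iterated error operator -/

/-- Error operator. -/
def Ef (n : ℕ) (g : ℝ → ℝ) : ℝ → ℝ := fun x => g x - Lop n g x

lemma contDiff_deriv_of_succ {j : ℕ} {g : ℝ → ℝ} (hg : ContDiff ℝ (j+1 : ℕ) g) :
    ContDiff ℝ (j : ℕ) (deriv g) := by
  have hg' : ContDiff ℝ ((j : WithTop ℕ∞) + 1) g := by exact_mod_cast hg
  exact (contDiff_succ_iff_deriv.mp hg').2.2

lemma differentiable_of_succ {j : ℕ} {g : ℝ → ℝ} (hg : ContDiff ℝ (j+1 : ℕ) g) :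
    Differentiable ℝ g := by
  have hg' : ContDiff ℝ ((j : WithTop ℕ∞) + 1) g := by exact_mod_cast hg
  exact (contDiff_succ_iff_deriv.mp hg').1

lemma contDiff_one_iteratedDeriv (j : ℕ) {g : ℝ → ℝ} (hg : ContDiff ℝ (j+1 : ℕ) g) :
    ContDiff ℝ 1 (iteratedDeriv j g) := by
  induction j generalizing g with
  | zero => simpa using hg
  | succ j ih =>
    rw [iteratedDeriv_succ']
    exact ih (contDiff_deriv_of_succ hg)

lemma periodic_Ef (n : ℕ) (hn : 1 ≤ n) {g : ℝ → ℝ} (hper : Function.Periodic g (2*π))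
    (hc : Continuous g) : Function.Periodic (Ef n g) (2*π) := by
  intro x
  unfold Ef
  rw [hper x, periodic_Lop n hn hper hc x]

lemma contDiff_Ef (n : ℕ) (hn : 1 ≤ n) {g : ℝ → ℝ} (hper : Function.Periodic g (2*π))
    {m : ℕ} (hg : ContDiff ℝ (m:ℕ) g) : ContDiff ℝ (m:ℕ) (Ef n g) :=
  hg.sub (contDiff_Lop n hn hper hg.continuous m)

lemma hasDerivAt_Ef (n : ℕ) (hn : 1 ≤ n) {g : ℝ → ℝ} (hper : Function.Periodic g (2*π))
    (hg : ContDiff ℝ 1 g) (x : ℝ) :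
    HasDerivAt (Ef n g) (Ef n (deriv g) x) x :=
  ((hg.differentiable one_ne_zero x).hasDerivAt).sub (hasDerivAt_Lop n hn hper hg x)

lemma deriv_Ef (n : ℕ) (hn : 1 ≤ n) {g : ℝ → ℝ} (hper : Function.Periodic g (2*π))
    (hg : ContDiff ℝ 1 g) : deriv (Ef n g) = Ef n (deriv g) := by
  funext x
  exact (hasDerivAt_Ef n hn hper hg x).deriv

lemma iteratedDeriv_Ef (n : ℕ) (hn : 1 ≤ n) (j : ℕ) :
    ∀ g : ℝ → ℝ, Function.Periodic g (2*π) → ContDiff ℝ (j:ℕ) g →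
    iteratedDeriv j (Ef n g) = Ef n (iteratedDeriv j g) := by
  induction j with
  | zero => intro g _ _; simp [iteratedDeriv_zero]
  | succ j ih =>
    intro g hper hg
    rw [iteratedDeriv_succ', iteratedDeriv_succ']
    rw [deriv_Ef n hn hper (hg.of_le (by exact_mod_cast Nat.one_le_iff_ne_zero.mpr (Nat.succ_ne_zero j)))]
    exact ih (deriv g) (periodic_deriv hper) (contDiff_deriv_of_succ hg)

/-! ### The main inductive estimate -/

lemma main_est (n : ℕ) (hn : 1 ≤ n) (j : ℕ) :
    ∀ g : ℝ → ℝ, Function.Periodic g (2*π) → ContDiff ℝ (j:ℕ) g → ∀ x : ℝ,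
      |(Ef n)^[j+1] g x| ≤ c1^(j+1) * ((n:ℝ)⁻¹)^j
        * modulusOfContinuity (iteratedDeriv j g) (1/(n:ℝ)) := by
  induction j with
  | zero =>
    intro g hper hg x
    have := Lop_approx n hn hper hg.continuous x
    simpa [iteratedDeriv_zero, Ef] using this
  | succ j ih =>
    intro g hper hg x
    have hn0 : (0:ℝ) < n := by exact_mod_cast hn
    have hδ : (0:ℝ) < 1/(n:ℝ) := by positivity
    have hgcont : Continuous g := hg.continuous
    set h : ℝ → ℝ := iteratedDeriv j g with hh
    have hh1 : ContDiff ℝ 1 h := contDiff_one_iteratedDeriv j hg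
    have hhper : Function.Periodic h (2*π) := periodic_iteratedDeriv hper j
    have hhc : Continuous h := hh1.continuous
    have hd_per : Function.Periodic (deriv h) (2*π) := periodic_deriv hhper
    have hd_cont : Continuous (deriv h) := hh1.continuous_deriv le_rfl
    obtain ⟨B2, hB2⟩ := bounded_of_per_cont hd_per hd_cont
    have hbdd : BddAbove (MS (deriv h) (1/(n:ℝ))) := MS_bddAbove hB2
    set w' : ℝ := modulusOfContinuity (deriv h) (1/(n:ℝ)) with hw'
    have hw'0 : 0 ≤ w' := moc_nonneg hδ hbdd
    -- step A : IH applied to `Ef n g`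
    have hEper : Function.Periodic (Ef n g) (2*π) := periodic_Ef n hn hper hgcont
    have hEcd : ContDiff ℝ (j:ℕ) (Ef n g) :=
      contDiff_Ef n hn hper (hg.of_le (by exact_mod_cast Nat.le_succ j))
    have hA := ih (Ef n g) hEper hEcd x
    -- step B : commutation
    have hB : iteratedDeriv j (Ef n g) = Ef n h :=
      iteratedDeriv_Ef n hn j g hper (hg.of_le (by exact_mod_cast Nat.le_succ j))
    -- step C : modulus bound for `Ef n h`
    have hdiffEf : Differentiable ℝ (Ef n h) := by
      have h2 : Differentiable ℝ (Lop n h) :=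
        (contDiff_Lop n hn hhper hhc 1).differentiable one_ne_zero
      exact (hh1.differentiable one_ne_zero).sub h2
    have hbound : ∀ y, |deriv (Ef n h) y| ≤ c1 * w' := by
      intro y
      rw [deriv_Ef n hn hhper hh1]
      exact Lop_approx n hn hd_per hd_cont y
    have hC : modulusOfContinuity (Ef n h) (1/(n:ℝ)) ≤ (1/(n:ℝ)) * (c1 * w') :=
      moc_le_of_deriv (mul_nonneg c1_pos.le hw'0) hδ hdiffEf hbound
    have hfacpos : (0:ℝ) ≤ c1^(j+1) * ((n:ℝ)⁻¹)^j :=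
      mul_nonneg (pow_nonneg c1_pos.le _) (pow_nonneg (by positivity) _)
    calc |(Ef n)^[j+1+1] g x| = |(Ef n)^[j+1] (Ef n g) x| := by
          rw [Function.iterate_succ_apply]
      _ ≤ c1^(j+1) * ((n:ℝ)⁻¹)^j * modulusOfContinuity (iteratedDeriv j (Ef n g)) (1/(n:ℝ)) := hA
      _ = c1^(j+1) * ((n:ℝ)⁻¹)^j * modulusOfContinuity (Ef n h) (1/(n:ℝ)) := by rw [hB]
      _ ≤ c1^(j+1) * ((n:ℝ)⁻¹)^j * ((1/(n:ℝ)) * (c1 * w')) :=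
          mul_le_mul_of_nonneg_left hC hfacpos
      _ = c1^(j+1+1) * ((n:ℝ)⁻¹)^(j+1) * w' := by
          rw [pow_succ, pow_succ]
          ring
      _ = c1^(j+1+1) * ((n:ℝ)⁻¹)^(j+1)
            * modulusOfContinuity (iteratedDeriv (j+1) g) (1/(n:ℝ)) := by
          rw [hw', hh, ← iteratedDeriv_succ]

/-! ### Trigonometric polynomial form of the approximant -/

lemma Ef_iter_per_cont (n : ℕ) (hn : 1 ≤ n) {f : ℝ → ℝ} (hper : Function.Periodic f (2*π))
    (hc : Continuous f) (m : ℕ) :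
    Function.Periodic ((Ef n)^[m] f) (2*π) ∧ Continuous ((Ef n)^[m] f) := by
  induction m with
  | zero => exact ⟨hper, hc⟩
  | succ m ih =>
    rw [Function.iterate_succ_apply']
    exact ⟨periodic_Ef n hn ih.1 ih.2,
      ih.2.sub (continuous_Lop n hn ih.1 ih.2)⟩

lemma TP_iterate (n : ℕ) (hn : 1 ≤ n) {f : ℝ → ℝ} (hper : Function.Periodic f (2*π))
    (hc : Continuous f) (M : ℕ) (hM : 2*n ≤ M + 2) (m : ℕ) :
    ∃ a b : ℕ → ℝ, ∀ x : ℝ, f x - (Ef n)^[m] f x = a 0 + ∑ j ∈ Finset.Icc 1 M,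
      (a j * Real.cos (j * x) + b j * Real.sin (j * x)) := by
  induction m with
  | zero =>
    refine ⟨fun _ => 0, fun _ => 0, fun x => ?_⟩
    simp
  | succ m ih =>
    obtain ⟨a, b, hab⟩ := ih
    obtain ⟨hper', hc'⟩ := Ef_iter_per_cont n hn hper hc m
    refine ⟨fun j => a j + coA n ((Ef n)^[m] f) j, fun j => b j + coB n ((Ef n)^[m] f) j,
      fun x => ?_⟩
    have e1 : f x - (Ef n)^[m+1] f x = (f x - (Ef n)^[m] f x) + Lop n ((Ef n)^[m] f) x := by
      rw [Function.iterate_succ_apply']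
      show f x - (((Ef n)^[m] f x) - Lop n ((Ef n)^[m] f) x) = _
      ring
    rw [e1, hab x, Lop_eq n hn hper' hc' M hM x]
    have hsum : ∑ j ∈ Finset.Icc 1 M, ((a j + coA n ((Ef n)^[m] f) j) * Real.cos (j*x)
          + (b j + coB n ((Ef n)^[m] f) j) * Real.sin (j*x))
        = (∑ j ∈ Finset.Icc 1 M, (a j * Real.cos (j*x) + b j * Real.sin (j*x)))
          + ∑ j ∈ Finset.Icc 1 M, (coA n ((Ef n)^[m] f) j * Real.cos (j*x)
              + coB n ((Ef n)^[m] f) j * Real.sin (j*x)) := by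
      rw [← Finset.sum_add_distrib]
      apply Finset.sum_congr rfl
      intro j _
      ring
    rw [hsum]
    ring

end JacksonAux
end

open JacksonAux in
/-- Jackson's theorem: for every `K` there is `C_K > 0` (depending only on `K`)
such that every `2π`-periodic `C^K` function `f` can, for each `N ≥ 1`, be
approximated by a real trigonometric polynomial of degree at most
`⌈(K+3)/2⌉⌊N/2⌋` with uniform error `≤ C_K ω_{f^{(K)}}(1/N)/N^K`. -/
theorem jackson_inequality_univariate (K : ℕ) :
    ∃ C : ℝ, 0 < C ∧
      ∀ f : ℝ → ℝ, Function.Periodic f (2 * π) → ContDiff ℝ K f →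
        ∀ N : ℕ, 1 ≤ N →
          ∃ a b : ℕ → ℝ,
            ∀ x : ℝ,
              |f x - (a 0 + ∑ n ∈ Finset.Icc 1 (((K + 3 + 1) / 2) * (N / 2)),
                  (a n * Real.cos (n * x) + b n * Real.sin (n * x)))|
                ≤ C * modulusOfContinuity (iteratedDeriv K f) (1 / N) / (N : ℝ) ^ K := by
  classical
  have hc1 := c1_pos
  refine ⟨(2*c1)^(K+1), by positivity, ?_⟩
  intro f hper hf N hN
  set M : ℕ := ((K + 3 + 1) / 2) * (N / 2) with hMdef
  set nn : ℕ := N / 2 + 1 with hnn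
  have hn : 1 ≤ nn := by omega
  have hc : Continuous f := hf.continuous
  have hMle : 2 * nn ≤ M + 2 := by
    have h2 : 2 ≤ (K + 3 + 1) / 2 := by omega
    have h3 : 2 * (N/2) ≤ M := by
      rw [hMdef]
      exact Nat.mul_le_mul_right _ h2
    omega
  obtain ⟨a, b, hab⟩ := TP_iterate nn hn hper hc M hMle (K+1)
  refine ⟨a, b, fun x => ?_⟩
  have hmain := main_est nn hn K f hper hf x
  have habs : |f x - (a 0 + ∑ n ∈ Finset.Icc 1 M,
      (a n * Real.cos (n * x) + b n * Real.sin (n * x)))| = |(Ef nn)^[K+1] f x| := by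
    congr 1
    linarith [hab x]
  rw [habs]
  -- numeric chain
  have hN0 : (0:ℝ) < N := by exact_mod_cast hN
  have hnn0 : (0:ℝ) < nn := by positivity
  have hNle : (N:ℝ) ≤ 2 * (nn:ℝ) := by
    have : N ≤ 2 * nn := by omega
    exact_mod_cast this
  have hinv : (nn:ℝ)⁻¹ ≤ 2/(N:ℝ) := by
    have e : (2:ℝ)/(N:ℝ) = ((N:ℝ)/2)⁻¹ := by
      field_simp
    rw [e]
    exact inv_anti₀ (by positivity) (by linarith)
  have hpow : ((nn:ℝ)⁻¹)^K ≤ (2/(N:ℝ))^K :=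
    pow_le_pow_left₀ (by positivity) hinv K
  have hKcont : Continuous (iteratedDeriv K f) :=
    hf.continuous_iteratedDeriv K (by exact_mod_cast le_rfl)
  have hKper : Function.Periodic (iteratedDeriv K f) (2*π) := periodic_iteratedDeriv hper K
  obtain ⟨B3, hB3⟩ := bounded_of_per_cont hKper hKcont
  have hδN : (0:ℝ) < 1/(N:ℝ) := by positivity
  have hδn : (0:ℝ) < 1/(nn:ℝ) := by positivity
  have hbddN : BddAbove (MS (iteratedDeriv K f) (1/(N:ℝ))) := MS_bddAbove hB3
  have hbddn : BddAbove (MS (iteratedDeriv K f) (1/(nn:ℝ))) := MS_bddAbove hB3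
  have hω0N : 0 ≤ modulusOfContinuity (iteratedDeriv K f) (1/(N:ℝ)) := moc_nonneg hδN hbddN
  have hω0n : 0 ≤ modulusOfContinuity (iteratedDeriv K f) (1/(nn:ℝ)) := moc_nonneg hδn hbddn
  have hωmono : modulusOfContinuity (iteratedDeriv K f) (1/(nn:ℝ))
      ≤ 2 * modulusOfContinuity (iteratedDeriv K f) (1/(N:ℝ)) := by
    apply moc_le_two_moc hδN _ hbddN
    rw [one_div, one_div]
    calc (nn:ℝ)⁻¹ ≤ 2/(N:ℝ) := hinv
      _ = 2 * (N:ℝ)⁻¹ := by ring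
  have hpos1 : (0:ℝ) ≤ c1^(K+1) := pow_nonneg hc1.le _
  calc |(Ef nn)^[K+1] f x|
      ≤ c1^(K+1) * ((nn:ℝ)⁻¹)^K * modulusOfContinuity (iteratedDeriv K f) (1/(nn:ℝ)) := hmain
    _ ≤ c1^(K+1) * (2/(N:ℝ))^K * modulusOfContinuity (iteratedDeriv K f) (1/(nn:ℝ)) := by
        apply mul_le_mul_of_nonneg_right _ hω0n
        exact mul_le_mul_of_nonneg_left hpow hpos1
    _ ≤ c1^(K+1) * (2/(N:ℝ))^K * (2 * modulusOfContinuity (iteratedDeriv K f) (1/(N:ℝ))) := by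
        apply mul_le_mul_of_nonneg_left hωmono
        exact mul_nonneg hpos1 (by positivity)
    _ = (2*c1)^(K+1) * modulusOfContinuity (iteratedDeriv K f) (1/(N:ℝ)) / (N:ℝ)^K := by
        rw [mul_pow, div_pow]
        field_simp
        ring
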